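/- arXiv:2605.31122 — 6 statements merged into one kernel-verified Lean document; each statement's English description precedes it below -/
import Mathlib

section
/- Let m, n, h, k be positive integers with m ≠ h (and m dividing h implicitly via the constraints). Suppose there exists a positive integer p such that (m·lcm(n,p))/n = h and lcm(n,p)/p = k. Then h/m and n/k are positive integers, gcd(k, h/m) = 1, and p = n·h/(m·k). -/
/-- Dimension compatibility for the STP tensor–vector equation `A ⋉ X = B`
with `A : m×n×r`, `B : h×k×r`, `X ∈ ℂ^p`, in the general case `m ≠ h`:
if a positive integer `p` satisfies `(m·lcm(n,p))/n = h` and `lcm(n,p)/p = k`,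
then `h/m` and `n/k` are positive integers (`m ∣ h`, `k ∣ n`),
`gcd(k, h/m) = 1` and `p = n·h/(m·k)`. -/
theorem stmt1 (m n h k : ℕ) (hm : 0 < m) (hn : 0 < n) (hh : 0 < h) (hk : 0 < k)
    (hmh : m ≠ h) (p : ℕ) (hp : 0 < p)
    (h1 : m * Nat.lcm n p / n = h) (h2 : Nat.lcm n p / p = k) :
    m ∣ h ∧ k ∣ n ∧ Nat.gcd k (h / m) = 1 ∧ p = n * h / (m * k) := by
  obtain ⟨g, n', p', hg, hcop, hn', hp'⟩ := Nat.exists_coprime' (Nat.gcd_pos_of_pos_left p hn)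
  -- hn' : n = n' * g, hp' : p = p' * g
  have hgcd : Nat.gcd n p = g := by
    rw [hn', hp', Nat.gcd_mul_right, hcop.gcd_eq_one, one_mul]
  have hlcm : Nat.lcm n p = n' * p' * g := by
    refine Nat.eq_of_mul_eq_mul_left hg ?_
    calc g * Nat.lcm n p = Nat.gcd n p * Nat.lcm n p := by rw [hgcd]
      _ = n * p := Nat.gcd_mul_lcm n p
      _ = g * (n' * p' * g) := by rw [hn', hp']; ring
  have hn'pos : 0 < n' := by
    rcases Nat.eq_zero_or_pos n' with h0 | h0
    · simp [h0] at hn'; omega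
    · exact h0
  have hp'pos : 0 < p' := by
    rcases Nat.eq_zero_or_pos p' with h0 | h0
    · simp [h0] at hp'; omega
    · exact h0
  have hk' : k = n' := by
    rw [← h2, hlcm, hp']
    rw [show n' * p' * g = n' * (p' * g) by ring]
    exact Nat.mul_div_cancel n' (by positivity)
  have hh' : h = m * p' := by
    rw [← h1, hlcm, hn']
    rw [show m * (n' * p' * g) = m * p' * (n' * g) by ring]
    exact Nat.mul_div_cancel _ (by positivity)
  refine ⟨⟨p', hh'⟩, by rw [hk', hn']; exact ⟨g, rfl⟩, ?_, ?_⟩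
  · rw [hk', hh', Nat.mul_div_cancel_left _ hm]
    exact hcop
  · rw [hh', hk', hn', hp']
    rw [show n' * g * (m * p') = p' * g * (m * n') by ring]
    rw [Nat.mul_div_cancel _ (by positivity)]
end

section
/- Let positive integers m, n, h, k, a, b, l, d, p, q satisfy: (m·lcm(n,p))/n = h, (q·lcm(n,p))/p = k, (p·lcm(q,a))/q = l, (b·lcm(q,a))/a = d, together with m = h and l = p. Then n/l and d/b are positive integers, both a·d/b and n/l divide k, and q = a·d/b = l·k/n. -/
/-- Dimension compatibility for the coupled STP tensor–matrix equations
`A ⋉ X = B`, `X ⋉ C = D` (`A : m×n×r`, `B : h×k×r`, `C : a×b×r`, `D : l×d×r`,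
`X ∈ ℂ^{p×q}`), simplified case `m = h`, `l = p`:
`n/l` and `d/b` are positive integers, both `a·d/b` and `n/l` divide `k`,
and `q = a·d/b = l·k/n`. -/
theorem stmt2 (m n h k a b l d p q : ℕ)
    (hm : 0 < m) (hn : 0 < n) (hh : 0 < h) (hk : 0 < k) (ha : 0 < a)
    (hb : 0 < b) (hl : 0 < l) (hd : 0 < d) (hp : 0 < p) (hq : 0 < q)
    (h1 : m * Nat.lcm n p / n = h) (h2 : q * Nat.lcm n p / p = k)
    (h3 : p * Nat.lcm q a / q = l) (h4 : b * Nat.lcm q a / a = d)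
    (hmh : m = h) (hlp : l = p) :
    l ∣ n ∧ b ∣ d ∧ (a * d / b) ∣ k ∧ (n / l) ∣ k ∧
      q = a * d / b ∧ q = l * k / n := by
  subst hmh hlp
  -- From h1 : lcm n l = n, hence l ∣ n
  obtain ⟨c, hc⟩ := Nat.dvd_lcm_left n l
  rw [hc, mul_comm n c, ← mul_assoc, Nat.mul_div_cancel _ hn] at h1
  have hc1 : c = 1 := Nat.eq_of_mul_eq_mul_left hh (by rw [h1, mul_one])
  rw [hc1, mul_one] at hc
  have hpn : l ∣ n := hc ▸ Nat.dvd_lcm_right n l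
  -- From h3 : lcm q a = q, hence a ∣ q
  obtain ⟨e, he⟩ := Nat.dvd_lcm_left q a
  rw [he, mul_comm q e, ← mul_assoc, Nat.mul_div_cancel _ hq] at h3
  have he1 : e = 1 := Nat.eq_of_mul_eq_mul_left hl (by rw [h3, mul_one])
  rw [he1, mul_one] at he
  have haq : a ∣ q := he ▸ Nat.dvd_lcm_right q a
  obtain ⟨f, hf⟩ := haq
  obtain ⟨g, hg⟩ := hpn
  -- compute d, k
  rw [he, hf, mul_comm a f, ← mul_assoc, Nat.mul_div_cancel _ ha] at h4
  rw [hc, hg, mul_comm l g, ← mul_assoc, Nat.mul_div_cancel _ hl] at h2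
  subst h4 h2 hf hg
  have hfpos : 0 < f := Nat.pos_of_ne_zero (by rintro rfl; simp at hq)
  refine ⟨⟨g, rfl⟩, ⟨f, rfl⟩, ?_, ?_, ?_, ?_⟩
  · have : a * (b * f) / b = a * f := by
      rw [mul_comm b f, ← mul_assoc, Nat.mul_div_cancel _ hb]
    rw [this]
    exact ⟨g, rfl⟩
  · rw [mul_comm l g, Nat.mul_div_cancel _ hl]
    exact ⟨a * f, by ring⟩
  · rw [mul_comm b f, ← mul_assoc, Nat.mul_div_cancel _ hb]
  · rw [show l * (a * f * g) = a * f * (l * g) by ring, Nat.mul_div_cancel _ (by positivity)]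
end

section
/- Let positive integers m, n, h, k, a, b, l, d, p, q satisfy the STP compatibility relations (m·lcm(n,p))/n = h, (q·lcm(n,p))/p = k, (p·lcm(q,a))/q = l, (b·lcm(q,a))/a = d, with m = h and l ≠ p. Set α = n/p and β = l/p. Then d/b is a positive integer, β ≠ 1, p = l/β = n/α, q = (a·d)/(b·β) = k/α, and gcd(β, d/b) = 1. -/
/-- Dimension compatibility for the coupled STP tensor–matrix equations
`A ⋉ X = B`, `X ⋉ C = D`, case `m = h`, `l ≠ p`.  With `α = n/p` and
`β = l/p`: `d/b` is a positive integer, `β ≠ 1`, `p = l/β = n/α`,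
`q = (a·d)/(b·β) = k/α`, and `gcd(β, d/b) = 1`. -/
theorem stmt3 (m n h k a b l d p q : ℕ)
    (hm : 0 < m) (hn : 0 < n) (hh : 0 < h) (hk : 0 < k) (ha : 0 < a)
    (hb : 0 < b) (hl : 0 < l) (hd : 0 < d) (hp : 0 < p) (hq : 0 < q)
    (h1 : m * Nat.lcm n p / n = h) (h2 : q * Nat.lcm n p / p = k)
    (h3 : p * Nat.lcm q a / q = l) (h4 : b * Nat.lcm q a / a = d)
    (hmh : m = h) (hlp : l ≠ p) :
    b ∣ d ∧ l / p ≠ 1 ∧ p = l / (l / p) ∧ p = n / (n / p) ∧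
      q = a * d / (b * (l / p)) ∧ q = k / (n / p) ∧
      Nat.gcd (l / p) (d / b) = 1 := by
  set t1 := Nat.lcm n p with ht1
  set t2 := Nat.lcm q a with ht2
  have hnt1 : n ∣ t1 := Nat.dvd_lcm_left n p
  have hpt1 : p ∣ t1 := Nat.dvd_lcm_right n p
  have hqt2 : q ∣ t2 := Nat.dvd_lcm_left q a
  have hat2 : a ∣ t2 := Nat.dvd_lcm_right q a
  have ht2pos : 0 < t2 := Nat.pos_of_ne_zero (Nat.lcm_ne_zero hq.ne' ha.ne')
  -- From h1 and m = h : t1 = n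
  have e1 : m * (t1 / n) = h := by rw [← Nat.mul_div_assoc m hnt1]; exact h1
  have ht1n : t1 / n = 1 := by
    have : m * (t1 / n) = m * 1 := by rw [mul_one, e1, hmh]
    exact Nat.eq_of_mul_eq_mul_left hm this
  have ht1eq : t1 = n := by
    have := Nat.div_mul_cancel hnt1
    rw [ht1n, one_mul] at this; exact this.symm
  have hpn : p ∣ n := ht1eq ▸ hpt1
  have e2 : q * (n / p) = k := by
    rw [← Nat.mul_div_assoc q hpn, ← ht1eq]; exact h2
  have e3 : p * (t2 / q) = l := by rw [← Nat.mul_div_assoc p hqt2]; exact h3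
  have e4 : b * (t2 / a) = d := by rw [← Nat.mul_div_assoc b hat2]; exact h4
  have hbeta : l / p = t2 / q := by rw [← e3, Nat.mul_div_cancel_left _ hp]
  have hdb : d / b = t2 / a := by rw [← e4, Nat.mul_div_cancel_left _ hb]
  have ht2q_pos : 0 < t2 / q := Nat.div_pos (Nat.le_of_dvd ht2pos hqt2) hq
  have hnp_pos : 0 < n / p := Nat.div_pos (Nat.le_of_dvd hn hpn) hp
  refine ⟨⟨t2 / a, e4.symm⟩, ?_, ?_, ?_, ?_, ?_, ?_⟩
  · intro hone
    apply hlp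
    rw [← e3, ← hbeta, hone, mul_one]
  · rw [hbeta, ← e3, Nat.mul_div_cancel _ ht2q_pos]
  · rw [← Nat.mul_div_cancel' hpn, Nat.mul_div_cancel_left _ hp,
      Nat.mul_div_cancel _ hnp_pos]
  · have h7 : a * d = b * (t2 / q) * q := by
      rw [← e4, mul_left_comm, Nat.mul_div_cancel' hat2,
        mul_assoc, Nat.div_mul_cancel hqt2]
    rw [hbeta, h7, Nat.mul_div_cancel_left _ (Nat.mul_pos hb ht2q_pos)]
  · rw [← e2, Nat.mul_div_cancel _ hnp_pos]
  · rw [hbeta, hdb]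
    set g := Nat.gcd q a with hg
    have hgpos : 0 < g := Nat.gcd_pos_of_pos_left a hq
    have hgq : g ∣ q := Nat.gcd_dvd_left q a
    have hga : g ∣ a := Nat.gcd_dvd_right q a
    have h5 : t2 = q * (a / g) := by
      rw [ht2, Nat.lcm, ← hg, Nat.mul_div_assoc q hga]
    have h6 : t2 = a * (q / g) := by
      rw [ht2, Nat.lcm, ← hg, mul_comm q a, Nat.mul_div_assoc a hgq]
    have e5 : t2 / q = a / g := by rw [h5, Nat.mul_div_cancel_left _ hq]
    have e6 : t2 / a = q / g := by rw [h6, Nat.mul_div_cancel_left _ ha]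
    rw [e5, e6]
    have := Nat.coprime_div_gcd_div_gcd (m := a) (n := q)
      (by rw [Nat.gcd_comm]; exact hgpos)
    rw [Nat.gcd_comm a q, ← hg] at this
    exact this
end

section
/- Let positive integers m, n, h, k, a, b, l, d, p, q satisfy (m·lcm(n,p))/n = h, (q·lcm(n,p))/p = k, (p·lcm(q,a))/q = l, (b·lcm(q,a))/a = d, with m ≠ h and l = p. Set α = lcm(n,p)/p. Then h/m and d/b are positive integers, p = l = (n·h)/(α·m), q = (a·d)/b = k/α, and gcd(α, h/m) = 1. -/
/-- Dimension compatibility for the coupled STP tensor–matrix equations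
`A ⋉ X = B`, `X ⋉ C = D`, case `m ≠ h`, `l = p`.  With `α = lcm(n,p)/p`:
`h/m` and `d/b` are positive integers, `p = l = (n·h)/(α·m)`,
`q = (a·d)/b = k/α`, and `gcd(α, h/m) = 1`. -/
theorem stmt4 (m n h k a b l d p q : ℕ)
    (hm : 0 < m) (hn : 0 < n) (hh : 0 < h) (hk : 0 < k) (ha : 0 < a)
    (hb : 0 < b) (hl : 0 < l) (hd : 0 < d) (hp : 0 < p) (hq : 0 < q)
    (h1 : m * Nat.lcm n p / n = h) (h2 : q * Nat.lcm n p / p = k)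
    (h3 : p * Nat.lcm q a / q = l) (h4 : b * Nat.lcm q a / a = d)
    (hmh : m ≠ h) (hlp : l = p) :
    m ∣ h ∧ b ∣ d ∧ p = l ∧
      p = n * h / (Nat.lcm n p / p * m) ∧
      q = a * d / b ∧ q = k / (Nat.lcm n p / p) ∧
      Nat.gcd (Nat.lcm n p / p) (h / m) = 1 := by
  have hnl : n ∣ Nat.lcm n p := Nat.dvd_lcm_left n p
  have hpl : p ∣ Nat.lcm n p := Nat.dvd_lcm_right n p
  have hg : 0 < Nat.gcd n p := Nat.gcd_pos_of_pos_left p hn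
  have hun : Nat.lcm n p / n * n = Nat.lcm n p := Nat.div_mul_cancel hnl
  have hap : Nat.lcm n p / p * p = Nat.lcm n p := Nat.div_mul_cancel hpl
  set g := Nat.gcd n p with hgdef
  set L := Nat.lcm n p with hLdef
  set u := L / n with hu
  set α := L / p with hα
  have hh1 : h = m * u := by rw [← h1, Nat.mul_div_assoc m hnl]
  have hk1 : k = q * α := by rw [← h2, Nat.mul_div_assoc q hpl]
  have hgl : g * L = n * p := Nat.gcd_mul_lcm n p
  have hug : u * g = p := by
    have h' : n * (u * g) = n * p := by
      calc n * (u * g) = u * n * g := by ring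
        _ = L * g := by rw [hun]
        _ = n * p := by rw [mul_comm]; exact hgl
    exact Nat.eq_of_mul_eq_mul_left hn h'
  have hag : α * g = n := by
    have h' : p * (α * g) = p * n := by
      calc p * (α * g) = α * p * g := by ring
        _ = L * g := by rw [hap]
        _ = p * n := by rw [mul_comm, hgl, mul_comm]
    exact Nat.eq_of_mul_eq_mul_left hp h'
  have hαpos : 0 < α := by
    rcases Nat.eq_zero_or_pos α with h0 | h0
    · rw [h0, zero_mul] at hag; omega
    · exact h0
  -- l = p part
  have hql : q ∣ Nat.lcm q a := Nat.dvd_lcm_left q a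
  have h3' : p * (Nat.lcm q a / q) = p := by
    rw [← Nat.mul_div_assoc p hql, h3, hlp]
  have hw1 : Nat.lcm q a / q = 1 :=
    Nat.eq_of_mul_eq_mul_left hp (show p * (Nat.lcm q a / q) = p * 1 by rw [mul_one]; exact h3')
  have hlq : Nat.lcm q a = q := by
    have h5 := Nat.div_mul_cancel hql
    rw [hw1, one_mul] at h5
    exact h5.symm
  have haq : a ∣ q := hlq ▸ Nat.dvd_lcm_right q a
  have hd1 : d = b * (q / a) := by rw [← h4, hlq, Nat.mul_div_assoc b haq]
  have hadbq : a * d = b * q := by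
    rw [hd1]
    calc a * (b * (q / a)) = b * (a * (q / a)) := by ring
      _ = b * q := by rw [Nat.mul_div_cancel' haq]
  refine ⟨⟨u, hh1⟩, ⟨q / a, hd1⟩, hlp.symm, ?_, ?_, ?_, ?_⟩
  · have : n * h = α * m * p := by
      calc n * h = m * (u * n) := by rw [hh1]; ring
        _ = m * L := by rw [hun]
        _ = m * (α * p) := by rw [hap]
        _ = α * m * p := by ring
    rw [this, Nat.mul_div_cancel_left p (by positivity)]
  · rw [hadbq, Nat.mul_div_cancel_left q hb]
  · rw [hk1, Nat.mul_div_cancel q hαpos]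
  · have h1' : h / m = u := by rw [hh1, Nat.mul_div_cancel_left u hm]
    rw [h1']
    have hcop := Nat.coprime_div_gcd_div_gcd (m := n) (n := p) hg
    have hαe : α = n / g := (Nat.div_eq_of_eq_mul_left hg hag.symm).symm
    have hue : u = p / g := (Nat.div_eq_of_eq_mul_left hg hug.symm).symm
    rw [hαe, hue]
    exact hcop
end

section
/- Let positive integers m, n, h, k, a, b, l, d, p, q satisfy (m·lcm(n,p))/n = h, (q·lcm(n,p))/p = k, (p·lcm(q,a))/q = l, (b·lcm(q,a))/a = d, with m ≠ h and l ≠ p. Set α = lcm(n,p)/p and β = l/p. Then h/m and d/b are positive integers, β ≠ 1, p = l/β = (n·h)/(m·α), q = k/α = (a·d)/(b·β), gcd(α, h/m) = 1, and gcd(β, d/b) = 1. -/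
/-- Dimension compatibility for the coupled STP tensor–matrix equations
`A ⋉ X = B`, `X ⋉ C = D`, general case `m ≠ h`, `l ≠ p`.  With
`α = lcm(n,p)/p` and `β = l/p`: `h/m` and `d/b` are positive integers,
`β ≠ 1`, `p = l/β = (n·h)/(m·α)`, `q = k/α = (a·d)/(b·β)`,
`gcd(α, h/m) = 1` and `gcd(β, d/b) = 1`. -/
theorem stmt5 (m n h k a b l d p q : ℕ)
    (hm : 0 < m) (hn : 0 < n) (hh : 0 < h) (hk : 0 < k) (ha : 0 < a)
    (hb : 0 < b) (hl : 0 < l) (hd : 0 < d) (hp : 0 < p) (hq : 0 < q)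
    (h1 : m * Nat.lcm n p / n = h) (h2 : q * Nat.lcm n p / p = k)
    (h3 : p * Nat.lcm q a / q = l) (h4 : b * Nat.lcm q a / a = d)
    (hmh : m ≠ h) (hlp : l ≠ p) :
    m ∣ h ∧ b ∣ d ∧ l / p ≠ 1 ∧
      p = l / (l / p) ∧ p = n * h / (m * (Nat.lcm n p / p)) ∧
      q = k / (Nat.lcm n p / p) ∧ q = a * d / (b * (l / p)) ∧
      Nat.gcd (Nat.lcm n p / p) (h / m) = 1 ∧
      Nat.gcd (l / p) (d / b) = 1 := by
  set t1 := Nat.lcm n p with ht1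
  set t2 := Nat.lcm q a with ht2
  have hnd : n ∣ t1 := Nat.dvd_lcm_left n p
  have hpd : p ∣ t1 := Nat.dvd_lcm_right n p
  have hqd : q ∣ t2 := Nat.dvd_lcm_left q a
  have had : a ∣ t2 := Nat.dvd_lcm_right q a
  have ht1pos : 0 < t1 := Nat.lcm_pos hn hp
  have ht2pos : 0 < t2 := Nat.lcm_pos hq ha
  have he1 : h = m * (t1 / n) := by rw [← h1, Nat.mul_div_assoc m hnd]
  have he2 : k = q * (t1 / p) := by rw [← h2, Nat.mul_div_assoc q hpd]
  have he3 : l = p * (t2 / q) := by rw [← h3, Nat.mul_div_assoc p hqd]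
  have he4 : d = b * (t2 / a) := by rw [← h4, Nat.mul_div_assoc b had]
  have hα : t1 / p > 0 := Nat.div_pos (Nat.le_of_dvd ht1pos hpd) hp
  have hβ0 : t2 / q > 0 := Nat.div_pos (Nat.le_of_dvd ht2pos hqd) hq
  have hβ : l / p = t2 / q := by rw [he3, Nat.mul_div_cancel_left _ hp]
  have hhm : h / m = t1 / n := by rw [he1, Nat.mul_div_cancel_left _ hm]
  have hdb : d / b = t2 / a := by rw [he4, Nat.mul_div_cancel_left _ hb]
  refine ⟨⟨t1 / n, he1⟩, ⟨t2 / a, he4⟩, ?_, ?_, ?_, ?_, ?_, ?_, ?_⟩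
  · rw [hβ]
    intro hc
    exact hlp (by rw [he3, hc, mul_one])
  · rw [hβ, he3, Nat.mul_div_cancel _ hβ0]
  · have hnh : n * h = m * t1 := by
      rw [he1, ← mul_assoc, mul_comm n m, mul_assoc, Nat.mul_div_cancel' hnd]
    rw [hnh, Nat.mul_div_mul_left _ _ hm, Nat.div_div_self hpd ht1pos.ne']
  · rw [he2, Nat.mul_div_cancel _ hα]
  · have had2 : a * d = b * t2 := by
      rw [he4, ← mul_assoc, mul_comm a b, mul_assoc, Nat.mul_div_cancel' had]
    rw [hβ, had2, Nat.mul_div_mul_left _ _ hb, Nat.div_div_self hqd ht2pos.ne']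
  · -- gcd (t1/p) (t1/n) = 1
    have hg : 0 < Nat.gcd n p := Nat.gcd_pos_of_pos_left _ hn
    have key : Nat.gcd n p * t1 = n * p := Nat.gcd_mul_lcm n p
    have e1 : t1 / p = n / Nat.gcd n p := by
      refine (Nat.div_eq_of_eq_mul_left hg ?_).symm
      have : Nat.gcd n p * (p * (t1 / p)) = (t1 / p * Nat.gcd n p) * p := by ring
      have h' : Nat.gcd n p * (p * (t1 / p)) = n * p := by
        rw [Nat.mul_div_cancel' hpd]; exact key
      rw [this] at h'
      exact (Nat.eq_of_mul_eq_mul_right hp h').symm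
    have e2 : t1 / n = p / Nat.gcd n p := by
      refine (Nat.div_eq_of_eq_mul_left hg ?_).symm
      have : Nat.gcd n p * (n * (t1 / n)) = (t1 / n * Nat.gcd n p) * n := by ring
      have h' : Nat.gcd n p * (n * (t1 / n)) = p * n := by
        rw [Nat.mul_div_cancel' hnd, key, mul_comm]
      rw [this] at h'
      exact (Nat.eq_of_mul_eq_mul_right hn h').symm
    rw [hhm, e1, e2]
    exact Nat.coprime_div_gcd_div_gcd hg
  · have hg : 0 < Nat.gcd q a := Nat.gcd_pos_of_pos_left _ hq
    have key : Nat.gcd q a * t2 = q * a := Nat.gcd_mul_lcm q a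
    have e1 : t2 / q = a / Nat.gcd q a := by
      refine (Nat.div_eq_of_eq_mul_left hg ?_).symm
      have : Nat.gcd q a * (q * (t2 / q)) = (t2 / q * Nat.gcd q a) * q := by ring
      have h' : Nat.gcd q a * (q * (t2 / q)) = a * q := by
        rw [Nat.mul_div_cancel' hqd, key, mul_comm]
      rw [this] at h'
      exact (Nat.eq_of_mul_eq_mul_right hq h').symm
    have e2 : t2 / a = q / Nat.gcd q a := by
      refine (Nat.div_eq_of_eq_mul_left hg ?_).symm
      have : Nat.gcd q a * (a * (t2 / a)) = (t2 / a * Nat.gcd q a) * a := by ring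
      have h' : Nat.gcd q a * (a * (t2 / a)) = q * a := by
        rw [Nat.mul_div_cancel' had]; exact key
      rw [this] at h'
      exact (Nat.eq_of_mul_eq_mul_right ha h').symm
    rw [hβ, hdb, e1, e2]
    have := Nat.coprime_div_gcd_div_gcd (m := a) (n := q)
      (by rw [Nat.gcd_comm]; exact hg)
    rw [Nat.gcd_comm a q] at this
    exact this
end

section
/- Suppose X ∈ C^{p₁×q₁} is a solution of the coupled matrix STP equations A ⋉ X = B and X ⋉ C = D, and p₂×q₂ is another permissible size with q₂/q₁ = p₂/p₁ = s a positive integer. Then X ⊗ I_s ∈ C^{p₂×q₂} is also a solution of the same coupled equations. -/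
open Matrix

/-- The semi-tensor product of matrices:
`A ⋉ X = (A ⊗ I_{t/n})(X ⊗ I_{t/p})` with `t = lcm(n,p)`, with indices
flattened to `Fin`s. -/
noncomputable def mstp {m n p q : ℕ} (A : Matrix (Fin m) (Fin n) ℂ)
    (X : Matrix (Fin p) (Fin q) ℂ) :
    Matrix (Fin (m * (Nat.lcm n p / n))) (Fin (q * (Nat.lcm n p / p))) ℂ :=
  (Matrix.reindex finProdFinEquiv
      (finProdFinEquiv.trans (finCongr (Nat.mul_div_cancel' (Nat.dvd_lcm_left n p))))
      (Matrix.kroneckerMap (· * ·) A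
        (1 : Matrix (Fin (Nat.lcm n p / n)) (Fin (Nat.lcm n p / n)) ℂ))) *
  (Matrix.reindex
      (finProdFinEquiv.trans (finCongr (Nat.mul_div_cancel' (Nat.dvd_lcm_right n p))))
      finProdFinEquiv
      (Matrix.kroneckerMap (· * ·) X
        (1 : Matrix (Fin (Nat.lcm n p / p)) (Fin (Nat.lcm n p / p)) ℂ)))

lemma heq_mat {m1 n1 m2 n2 : ℕ} (h1 : m1 = m2) (h2 : n1 = n2)
    {M : Matrix (Fin m1) (Fin n1) ℂ} {N : Matrix (Fin m2) (Fin n2) ℂ}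
    (h : ∀ i j, M i j = N (Fin.cast h1 i) (Fin.cast h2 j)) : HEq M N := by
  subst h1; subst h2
  exact heq_of_eq (by ext i j; simpa using h i j)

lemma delta_combine {p q : ℕ} (X : Matrix (Fin p) (Fin q) ℂ) {s v : ℕ} (hv : 0 < v)
    {a a' : Fin p} {b b' : Fin q} {k j : ℕ}
    (ha : (a:ℕ) = k / v / s) (hb : (b:ℕ) = j / v / s)
    (ha' : (a':ℕ) = k / (s*v)) (hb' : (b':ℕ) = j / (s*v)) :
    X a b * (if (k/v) % s = (j/v) % s then (1:ℂ) else 0) * (if k % v = j % v then 1 else 0)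
    = X a' b' * (if k % (s*v) = j % (s*v) then 1 else 0) := by
  have haa : a = a' := Fin.ext (by rw [ha, ha', Nat.div_div_eq_div_mul, Nat.mul_comm v s])
  have hbb : b = b' := Fin.ext (by rw [hb, hb', Nat.div_div_eq_div_mul, Nat.mul_comm v s])
  have hk : k % (s*v) = v * (k / v % s) + k % v := by rw [Nat.mul_comm s v, Nat.mod_mul]; omega
  have hj : j % (s*v) = v * (j / v % s) + j % v := by rw [Nat.mul_comm s v, Nat.mod_mul]; omega
  have key : k % (s*v) = j % (s*v) ↔ (k/v) % s = (j/v) % s ∧ k % v = j % v := by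
    constructor
    · intro h
      have h2 : k % v = j % v := by
        have := congrArg (· % v) h
        simpa [Nat.mod_mod_of_dvd _ (Dvd.intro_left s rfl)] using this
      refine ⟨?_, h2⟩
      rw [hk, hj, h2] at h
      exact Nat.eq_of_mul_eq_mul_left hv (by omega)
    · rintro ⟨h1, h2⟩; rw [hk, hj, h1, h2]
  by_cases h : k % (s*v) = j % (s*v)
  · obtain ⟨h1, h2⟩ := key.mp h
    rw [haa, hbb]; simp [h, h1, h2]
  · rw [if_neg h, mul_zero]
    rcases not_and_or.mp (fun hc => h (key.mpr hc)) with h1 | h2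
    · rw [if_neg h1, mul_zero, zero_mul]
    · rw [if_neg h2, mul_zero]

lemma key1 {m n p₁ q₁ p₂ q₂ s : ℕ}
    (A : Matrix (Fin m) (Fin n) ℂ) (X : Matrix (Fin p₁) (Fin q₁) ℂ)
    (hs : 0 < s) (hp2 : p₂ = p₁ * s) (hq2 : q₂ = q₁ * s)
    (hB1 : m * (Nat.lcm n p₂ / n) = m * (Nat.lcm n p₁ / n))
    (hB2 : q₂ * (Nat.lcm n p₂ / p₂) = q₁ * (Nat.lcm n p₁ / p₁))
    (hm : 0 < m) (hn : 0 < n) (hp1 : 0 < p₁)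
    (X' : Matrix (Fin p₂) (Fin q₂) ℂ)
    (hX' : X' = Matrix.reindex (finProdFinEquiv.trans (finCongr hp2.symm))
      (finProdFinEquiv.trans (finCongr hq2.symm))
      (Matrix.kroneckerMap (· * ·) X (1 : Matrix (Fin s) (Fin s) ℂ))) :
    ∀ (I : Fin (m * (Nat.lcm n p₂ / n))) (J : Fin (q₂ * (Nat.lcm n p₂ / p₂))),
      mstp A X' I J = mstp A X (Fin.cast hB1 I) (Fin.cast hB2 J) := by
  intro I J
  have hp2pos : 0 < p₂ := hp2 ▸ Nat.mul_pos hp1 hs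
  have tpos : 0 < Nat.lcm n p₁ := Nat.lcm_pos hn hp1
  have ht : Nat.lcm n p₂ = Nat.lcm n p₁ := by
    have h := Nat.eq_of_mul_eq_mul_left hm hB1
    have d2 := Nat.dvd_lcm_left n p₂
    have d1 := Nat.dvd_lcm_left n p₁
    rw [← Nat.mul_div_cancel' d2, ← Nat.mul_div_cancel' d1, h]
  have hp2dvd : p₂ ∣ Nat.lcm n p₁ := ht ▸ Nat.dvd_lcm_right n p₂
  have hv2pos : 0 < Nat.lcm n p₁ / p₂ := Nat.div_pos (Nat.le_of_dvd tpos hp2dvd) hp2pos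
  have hv : Nat.lcm n p₁ / p₁ = s * (Nat.lcm n p₁ / p₂) := by
    refine Nat.eq_of_mul_eq_mul_left hp1 ?_
    rw [Nat.mul_div_cancel' (Nat.dvd_lcm_right n p₁), ← Nat.mul_assoc, ← hp2,
      Nat.mul_div_cancel' hp2dvd]
  simp only [mstp, Matrix.mul_apply]
  rw [← Fin.sum_congr' _ ht]
  refine Finset.sum_congr rfl fun x _ => ?_
  simp only [hX', Matrix.reindex_apply, Matrix.submatrix_apply, Matrix.kroneckerMap_apply,
    Equiv.symm_trans_apply, finCongr_symm, finCongr_apply, finProdFinEquiv,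
    Equiv.coe_fn_symm_mk, Matrix.one_apply, Fin.divNat, Fin.modNat, Fin.mk.injEq,
    Fin.coe_cast, ht, hv]
  congr 1
  exact delta_combine X hv2pos rfl rfl rfl rfl

lemma key2 {p₁ q₁ a b q₂ p₂ s : ℕ}
    (X : Matrix (Fin p₁) (Fin q₁) ℂ) (C : Matrix (Fin a) (Fin b) ℂ)
    (hs : 0 < s) (hp2 : p₂ = p₁ * s) (hq2 : q₂ = q₁ * s)
    (hD1 : p₂ * (Nat.lcm q₂ a / q₂) = p₁ * (Nat.lcm q₁ a / q₁))
    (hD2 : b * (Nat.lcm q₂ a / a) = b * (Nat.lcm q₁ a / a))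
    (hq1 : 0 < q₁) (ha : 0 < a) (hb : 0 < b)
    (X' : Matrix (Fin p₂) (Fin q₂) ℂ)
    (hX' : X' = Matrix.reindex (finProdFinEquiv.trans (finCongr hp2.symm))
      (finProdFinEquiv.trans (finCongr hq2.symm))
      (Matrix.kroneckerMap (· * ·) X (1 : Matrix (Fin s) (Fin s) ℂ))) :
    ∀ (I : Fin (p₂ * (Nat.lcm q₂ a / q₂))) (J : Fin (b * (Nat.lcm q₂ a / a))),
      mstp X' C I J = mstp X C (Fin.cast hD1 I) (Fin.cast hD2 J) := by
  intro I J
  have hq2pos : 0 < q₂ := hq2 ▸ Nat.mul_pos hq1 hs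
  have tpos : 0 < Nat.lcm q₁ a := Nat.lcm_pos hq1 ha
  have ht : Nat.lcm q₂ a = Nat.lcm q₁ a := by
    have h := Nat.eq_of_mul_eq_mul_left hb hD2
    have d2 := Nat.dvd_lcm_right q₂ a
    have d1 := Nat.dvd_lcm_right q₁ a
    rw [← Nat.mul_div_cancel' d2, ← Nat.mul_div_cancel' d1, h]
  have hq2dvd : q₂ ∣ Nat.lcm q₁ a := ht ▸ Nat.dvd_lcm_left q₂ a
  have hv2pos : 0 < Nat.lcm q₁ a / q₂ := Nat.div_pos (Nat.le_of_dvd tpos hq2dvd) hq2pos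
  have hv : Nat.lcm q₁ a / q₁ = s * (Nat.lcm q₁ a / q₂) := by
    refine Nat.eq_of_mul_eq_mul_left hq1 ?_
    rw [Nat.mul_div_cancel' (Nat.dvd_lcm_left q₁ a), ← Nat.mul_assoc, ← hq2,
      Nat.mul_div_cancel' hq2dvd]
  simp only [mstp, Matrix.mul_apply]
  rw [← Fin.sum_congr' _ ht]
  refine Finset.sum_congr rfl fun x _ => ?_
  simp only [hX', Matrix.reindex_apply, Matrix.submatrix_apply, Matrix.kroneckerMap_apply,
    Equiv.symm_trans_apply, finCongr_symm, finCongr_apply, finProdFinEquiv,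
    Equiv.coe_fn_symm_mk, Matrix.one_apply, Fin.divNat, Fin.modNat, Fin.mk.injEq,
    Fin.coe_cast, ht, hv]
  congr 1
  exact delta_combine X hv2pos rfl rfl rfl rfl

/-- If `X ∈ ℂ^{p₁×q₁}` solves the coupled STP equations `A ⋉ X = B`,
`X ⋉ C = D`, and `p₂ × q₂` is another permissible size with
`p₂/p₁ = q₂/q₁ = s`, then `X ⊗ I_s ∈ ℂ^{p₂×q₂}` solves the same coupled
equations. -/
theorem stmt6 {m n p₁ q₁ a b p₂ q₂ s : ℕ}
    (A : Matrix (Fin m) (Fin n) ℂ) (X : Matrix (Fin p₁) (Fin q₁) ℂ)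
    (C : Matrix (Fin a) (Fin b) ℂ)
    (B : Matrix (Fin (m * (Nat.lcm n p₁ / n))) (Fin (q₁ * (Nat.lcm n p₁ / p₁))) ℂ)
    (D : Matrix (Fin (p₁ * (Nat.lcm q₁ a / q₁))) (Fin (b * (Nat.lcm q₁ a / a))) ℂ)
    (hs : 0 < s) (hp2 : p₂ = p₁ * s) (hq2 : q₂ = q₁ * s)
    -- the size `p₂ × q₂` is permissible for the same system:
    (hB1 : m * (Nat.lcm n p₂ / n) = m * (Nat.lcm n p₁ / n))
    (hB2 : q₂ * (Nat.lcm n p₂ / p₂) = q₁ * (Nat.lcm n p₁ / p₁))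
    (hD1 : p₂ * (Nat.lcm q₂ a / q₂) = p₁ * (Nat.lcm q₁ a / q₁))
    (hD2 : b * (Nat.lcm q₂ a / a) = b * (Nat.lcm q₁ a / a))
    (hB : mstp A X = B) (hD : mstp X C = D)
    (X' : Matrix (Fin p₂) (Fin q₂) ℂ)
    (hX' : X' = Matrix.reindex (finProdFinEquiv.trans (finCongr hp2.symm))
      (finProdFinEquiv.trans (finCongr hq2.symm))
      (Matrix.kroneckerMap (· * ·) X (1 : Matrix (Fin s) (Fin s) ℂ))) :
    HEq (mstp A X') B ∧ HEq (mstp X' C) D := by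
  subst hB hD
  constructor
  · by_cases hm : 0 < m
    · by_cases hn : 0 < n
      · by_cases hp1 : 0 < p₁
        · exact heq_mat hB1 hB2 (key1 A X hs hp2 hq2 hB1 hB2 hm hn hp1 X' hX')
        · -- p₁ = 0, rows empty
          refine heq_mat hB1 hB2 fun i j => ?_
          have h0 : p₁ = 0 := by omega
          have : m * (Nat.lcm n p₂ / n) = 0 := by
            simp [hp2, h0, Nat.lcm_zero_right]
          exact absurd i.isLt (by omega)
      · refine heq_mat hB1 hB2 fun i j => ?_
        have h0 : n = 0 := by omega
        have : m * (Nat.lcm n p₂ / n) = 0 := by simp [h0]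
        exact absurd i.isLt (by omega)
    · refine heq_mat hB1 hB2 fun i j => ?_
      have h0 : m = 0 := by omega
      have : m * (Nat.lcm n p₂ / n) = 0 := by simp [h0]
      exact absurd i.isLt (by omega)
  · by_cases hq1 : 0 < q₁
    · by_cases ha : 0 < a
      · by_cases hb : 0 < b
        · exact heq_mat hD1 hD2 (key2 X C hs hp2 hq2 hD1 hD2 hq1 ha hb X' hX')
        · refine heq_mat hD1 hD2 fun i j => ?_
          have h0 : b = 0 := by omega
          have : b * (Nat.lcm q₂ a / a) = 0 := by simp [h0]
          exact absurd j.isLt (by omega)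
      · refine heq_mat hD1 hD2 fun i j => ?_
        have h0 : a = 0 := by omega
        have : p₂ * (Nat.lcm q₂ a / q₂) = 0 := by simp [h0, Nat.lcm_zero_right]
        exact absurd i.isLt (by omega)
    · refine heq_mat hD1 hD2 fun i j => ?_
      have h0 : q₁ = 0 := by omega
      have : p₂ * (Nat.lcm q₂ a / q₂) = 0 := by simp [hq2, h0]
      exact absurd i.isLt (by omega)
end
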